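/- Let a, b ≥ 2 be natural numbers and suppose a^m = b^n for some positive integers m, n. Then there exist a natural number c ≥ 2 and positive integers r, s such that a = c^r and b = c^s. -/

import Mathlib

theorem mult_dependent_common_base (a b : ℕ) (ha : 2 ≤ a) (hb : 2 ≤ b)
    (m n : ℕ) (hm : 0 < m) (hn : 0 < n) (h : a ^ m = b ^ n) :
    ∃ c r s : ℕ, 2 ≤ c ∧ 0 < r ∧ 0 < s ∧ a = c ^ r ∧ b = c ^ s := by
  set g := Nat.gcd m n with hg
  have hgpos : 0 < g := Nat.gcd_pos_of_pos_left n hm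
  set m' := m / g with hm'def
  set n' := n / g with hn'def
  have hm' : m = g * m' := (Nat.mul_div_cancel' (Nat.gcd_dvd_left m n)).symm
  have hn' : n = g * n' := (Nat.mul_div_cancel' (Nat.gcd_dvd_right m n)).symm
  have hcop : Nat.Coprime m' n' := Nat.coprime_div_gcd_div_gcd hgpos
  have hm'pos : 0 < m' := Nat.pos_of_ne_zero fun h0 => by rw [h0, mul_zero] at hm'; omega
  have hn'pos : 0 < n' := Nat.pos_of_ne_zero fun h0 => by rw [h0, mul_zero] at hn'; omega
  have key : a ^ m' = b ^ n' := by
    have hpow : (a ^ m') ^ g = (b ^ n') ^ g := by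
      rw [← pow_mul, ← pow_mul, mul_comm m' g, mul_comm n' g, ← hm', ← hn', h]
    exact Nat.pow_left_injective hgpos.ne' hpow
  have keyq : (a : ℚ≥0) ^ m' = (b : ℚ≥0) ^ n' := by exact_mod_cast congrArg (Nat.cast : ℕ → ℚ≥0) key
  obtain ⟨c, hca, hcb⟩ := (pow_eq_pow_iff_of_coprime hcop).mp keyq
  have hden : c.den = 1 := by
    have h1 : c.den ^ n' = 1 := by
      have := congrArg NNRat.den hca
      simpa using this.symm
    exact (pow_eq_one_iff.mp h1).resolve_right hn'pos.ne'
  have hc : c = (c.num : ℚ≥0) := NNRat.ext_num_den (by simp) (by simp [hden])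
  rw [hc] at hca hcb
  have haN : a = c.num ^ n' := by exact_mod_cast hca
  have hbN : b = c.num ^ m' := by exact_mod_cast hcb
  refine ⟨c.num, n', m', ?_, hn'pos, hm'pos, haN, hbN⟩
  by_contra hlt
  push_neg at hlt
  interval_cases h' : c.num
  · rw [zero_pow hn'pos.ne'] at haN; omega
  · rw [one_pow] at haN; omega
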